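/- Let S(λ) be an n×n pencil of the block form [[A(λ), B(λ), C(λ)], [B(λ)^⊤, R(λ), 0], [C(λ)^⊤, 0, 0]], where C(λ) has size a×(n−r+a), R(λ) has size (r−2a)×(r−2a), and suppose rank S = r over ℂ(λ). Then rank C = a and rank R = r−2a over ℂ(λ); in particular R(λ) is a regular pencil. -/
import Mathlib


open Matrix

/-- The `n × n` block matrix `[[A, B, C], [Bᵀ, R, 0], [Cᵀ, 0, 0]]`. -/
def blockSym3 {F : Type*} [CommRing F] {a b c : ℕ}
    (A : Matrix (Fin a) (Fin a) F) (B : Matrix (Fin a) (Fin b) F)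
    (C : Matrix (Fin a) (Fin c) F) (R : Matrix (Fin b) (Fin b) F) :
    Matrix (Fin a ⊕ (Fin b ⊕ Fin c)) (Fin a ⊕ (Fin b ⊕ Fin c)) F :=
  Matrix.fromBlocks A
    (Matrix.of fun i j => Sum.elim (B i) (C i) j)
    (Matrix.of fun i j => Sum.elim (fun k => B j k) (fun k => C j k) i)
    (Matrix.fromBlocks R 0 0 0)

section Aux

variable {F : Type*} [Field F] {a b c : ℕ}
variable (A : Matrix (Fin a) (Fin a) F) (B : Matrix (Fin a) (Fin b) F)
    (C : Matrix (Fin a) (Fin c) F) (R : Matrix (Fin b) (Fin b) F)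

lemma blockSym3_mulVec_inr_inr (u : Fin a ⊕ (Fin b ⊕ Fin c) → F) (k : Fin c) :
    (blockSym3 A B C R *ᵥ u) (Sum.inr (Sum.inr k))
      = (Cᵀ *ᵥ fun j => u (Sum.inl j)) k := by
  simp [blockSym3, Matrix.mulVec, dotProduct, Fintype.sum_sum_type,
    Matrix.fromBlocks, Matrix.transpose_apply]

lemma blockSym3_mulVec_elim (y : Fin b → F) (z : Fin c → F) :
    blockSym3 A B C R *ᵥ (Sum.elim 0 (Sum.elim y z))
      = Sum.elim (B *ᵥ y + C *ᵥ z) (Sum.elim (R *ᵥ y) 0) := by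
  funext i
  rcases i with i | (i | i) <;>
    simp [blockSym3, Matrix.mulVec, dotProduct, Fintype.sum_sum_type,
      Matrix.fromBlocks, Finset.sum_add_distrib]

set_option synthInstance.maxHeartbeats 800000 in
/-- The rank of the block matrix is at most `rank C + (a + b)` (row-counting). -/
lemma blockSym3_rank_le :
    (blockSym3 A B C R).rank ≤ C.rank + (a + b) := by
  classical
  set S := blockSym3 A B C R with hS
  set W := LinearMap.range S.mulVecLin with hW
  set π : ((Fin a ⊕ (Fin b ⊕ Fin c)) → F) →ₗ[F] (Fin c → F) :=
    LinearMap.funLeft F F (fun k => Sum.inr (Sum.inr k)) with hπ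
  set f : W →ₗ[F] (Fin c → F) := π.domRestrict W with hf
  have hrange : LinearMap.range f ≤ LinearMap.range Cᵀ.mulVecLin := by
    rintro x ⟨⟨w, u, rfl⟩, rfl⟩
    refine ⟨fun j => u (Sum.inl j), ?_⟩
    funext k
    rw [Matrix.mulVecLin_apply]
    exact (blockSym3_mulVec_inr_inr A B C R u k).symm
  have hrangele : Module.finrank F (LinearMap.range f) ≤ Cᵀ.rank :=
    Submodule.finrank_mono hrange
  have hπsurj : Function.Surjective π := by
    rw [hπ]
    refine LinearMap.funLeft_surjective_of_injective F F _ ?_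
    intro x y hxy
    simpa using hxy
  have hπnull := LinearMap.finrank_range_add_finrank_ker π
  rw [LinearMap.range_eq_top.mpr hπsurj, finrank_top] at hπnull
  have hkerπ : Module.finrank F (LinearMap.ker π) ≤ a + b := by
    simp only [Module.finrank_pi, Fintype.card_sum, Fintype.card_fin] at hπnull
    omega
  have hker_eq : LinearMap.ker f = Submodule.comap W.subtype (LinearMap.ker π) :=
    LinearMap.ker_domRestrict W π
  have hkerle : Module.finrank F (LinearMap.ker f) ≤ a + b := by
    rw [hker_eq]
    calc Module.finrank F (Submodule.comap W.subtype (LinearMap.ker π))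
        = Module.finrank F
            (Submodule.map W.subtype (Submodule.comap W.subtype (LinearMap.ker π))) :=
          (Submodule.equivMapOfInjective W.subtype (Submodule.injective_subtype W)
            _).finrank_eq
      _ ≤ Module.finrank F (LinearMap.ker π) :=
          Submodule.finrank_mono (Submodule.map_comap_le _ _)
      _ ≤ a + b := hkerπ
  have h1 := LinearMap.finrank_range_add_finrank_ker f
  calc S.rank = Module.finrank F W := rfl
    _ = Module.finrank F (LinearMap.range f) + Module.finrank F (LinearMap.ker f) := h1.symm
    _ ≤ Cᵀ.rank + (a + b) := add_le_add hrangele hkerle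
    _ = C.rank + (a + b) := by rw [Matrix.rank_transpose]

end Aux

set_option synthInstance.maxHeartbeats 1000000 in
set_option maxHeartbeats 1000000 in
/-- If the `n × n` pencil `S(λ) = [[A, B, C], [Bᵀ, R, 0], [Cᵀ, 0, 0]]`, with `C` of size
`a × (n-r+a)` and `R` of size `(r-2a) × (r-2a)`, has rank `r` over `ℂ(λ)`, then
`rank C = a`, `rank R = r - 2a`, and in particular `R(λ)` is a regular pencil. -/
theorem stmt9 (n r a : ℕ) (h2a : 2 * a ≤ r) (hrn : r ≤ n)
    (A : Matrix (Fin a) (Fin a) (RatFunc ℂ))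
    (B : Matrix (Fin a) (Fin (r - 2 * a)) (RatFunc ℂ))
    (C : Matrix (Fin a) (Fin (n - r + a)) (RatFunc ℂ))
    (R : Matrix (Fin (r - 2 * a)) (Fin (r - 2 * a)) (RatFunc ℂ))
    (hrank : (blockSym3 A B C R).rank = r) :
    C.rank = a ∧ R.rank = r - 2 * a ∧ R.det ≠ 0 := by
  classical
  -- Step 1: rank C = a
  have hCle : C.rank ≤ a := by simpa using C.rank_le_card_height
  have hSle := blockSym3_rank_le A B C R
  rw [hrank] at hSle
  have hC : C.rank = a := by omega
  -- C.mulVecLin is surjective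
  have hCsurj : LinearMap.range C.mulVecLin = ⊤ := by
    apply Submodule.eq_top_of_finrank_eq
    have h : Module.finrank (RatFunc ℂ) (Fin a → RatFunc ℂ) = a := by
      simp [Module.finrank_pi]
    rw [h]
    exact hC
  -- Step 2: det R ≠ 0
  have hdet : R.det ≠ 0 := by
    intro hdet0
    obtain ⟨v, hv, hRv⟩ := (Matrix.exists_mulVec_eq_zero_iff).mpr hdet0
    obtain ⟨w, hw⟩ : ∃ w, C *ᵥ w = -(B *ᵥ v) := by
      have hmem : (-(B *ᵥ v)) ∈ LinearMap.range C.mulVecLin := hCsurj ▸ Submodule.mem_top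
      obtain ⟨w, hw⟩ := hmem
      exact ⟨w, by rw [← Matrix.mulVecLin_apply]; exact hw⟩
    -- injective linear map from (ker C) × F into ker S
    set ψ : (↥(LinearMap.ker C.mulVecLin) × RatFunc ℂ) →ₗ[RatFunc ℂ]
        ((Fin a ⊕ (Fin (r - 2 * a) ⊕ Fin (n - r + a))) → RatFunc ℂ) :=
      { toFun := fun p =>
          Sum.elim 0 (Sum.elim (p.2 • v) ((p.1 : Fin (n - r + a) → RatFunc ℂ) + p.2 • w))
        map_add' := by
          intro p q
          funext i
          rcases i with i | (i | i) <;>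
            simp [add_smul] <;> ring
        map_smul' := by
          intro t p
          funext i
          rcases i with i | (i | i) <;>
            simp [smul_smul, mul_add, mul_assoc] } with hψdef
    have hψmem : ∀ p, ψ p ∈ LinearMap.ker (blockSym3 A B C R).mulVecLin := by
      rintro ⟨z, t⟩
      rw [LinearMap.mem_ker, Matrix.mulVecLin_apply]
      show blockSym3 A B C R *ᵥ
        (Sum.elim 0 (Sum.elim (t • v) ((z : Fin (n - r + a) → RatFunc ℂ) + t • w))) = 0
      rw [blockSym3_mulVec_elim]
      have hz : C *ᵥ (z : Fin (n - r + a) → RatFunc ℂ) = 0 := by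
        have h2 := z.2
        rwa [LinearMap.mem_ker, Matrix.mulVecLin_apply] at h2
      have e1 : B *ᵥ (t • v) + C *ᵥ ((z : Fin (n - r + a) → RatFunc ℂ) + t • w) = 0 := by
        rw [Matrix.mulVec_add, Matrix.mulVec_smul, Matrix.mulVec_smul, hw, hz]
        simp
      have e2 : R *ᵥ (t • v) = 0 := by rw [Matrix.mulVec_smul, hRv]; simp
      rw [e1, e2]
      funext i
      rcases i with i | (i | i) <;> simp
    set ψ' : (↥(LinearMap.ker C.mulVecLin) × RatFunc ℂ) →ₗ[RatFunc ℂ]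
        ↥(LinearMap.ker (blockSym3 A B C R).mulVecLin) :=
      LinearMap.codRestrict _ ψ hψmem with hψ'def
    have hψinj : Function.Injective ψ' := by
      refine (injective_iff_map_eq_zero ψ').mpr ?_
      intro p hp
      have hp0 : ψ p = 0 := congrArg Subtype.val hp
      have h2 : p.2 • v = 0 := by
        funext i
        exact congrFun hp0 (Sum.inr (Sum.inl i))
      have hp2 : p.2 = 0 := by
        rcases smul_eq_zero.mp h2 with h | h
        · exact h
        · exact absurd h hv
      have hp1 : p.1 = 0 := by
        apply Subtype.ext
        funext k
        have h3 : ((p.1 : Fin (n - r + a) → RatFunc ℂ) + p.2 • w) k = 0 :=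
          congrFun hp0 (Sum.inr (Sum.inr k))
        simpa [hp2] using h3
      have hpe : p = (p.1, p.2) := rfl
      rw [hpe, hp1, hp2]
      rfl
    have hcount := LinearMap.finrank_le_finrank_of_injective hψinj
    rw [Module.finrank_prod] at hcount
    -- rank-nullity for C and S
    have hCnull := LinearMap.finrank_range_add_finrank_ker C.mulVecLin
    have hSnull := LinearMap.finrank_range_add_finrank_ker (blockSym3 A B C R).mulVecLin
    have hCrange : Module.finrank (RatFunc ℂ) (LinearMap.range C.mulVecLin) = a := hC
    have hSrange :
        Module.finrank (RatFunc ℂ) (LinearMap.range (blockSym3 A B C R).mulVecLin) = r := hrank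
    rw [hCrange, Module.finrank_pi, Fintype.card_fin] at hCnull
    rw [hSrange, Module.finrank_pi] at hSnull
    simp only [Fintype.card_sum, Fintype.card_fin] at hSnull
    have hself : Module.finrank (RatFunc ℂ) (RatFunc ℂ) = 1 := Module.finrank_self _
    rw [hself] at hcount
    omega
  -- Step 3: rank R
  have hRunit : IsUnit R := (Matrix.isUnit_iff_isUnit_det R).mpr (isUnit_iff_ne_zero.mpr hdet)
  have hR : R.rank = r - 2 * a := by
    rw [Matrix.rank_of_isUnit R hRunit, Fintype.card_fin]
  exact ⟨hC, hR, hdet⟩
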